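/- Let L ⊂ TM ⊕ T*M be the Dirac structure of a Poisson bivector Λ (sections Λξ + ξ) and N(X+ξ) = N₀X. If the contracted product ∘_N is skew-symmetric on sections of L, then N₀Λ is skew-symmetric: N₀Λ = Λ ᵗN₀. -/

import Mathlib

set_option linter.unusedSectionVars false

open Manifold
local notation "∞" => (⊤ : ℕ∞)

variable {EE : Type*} [NormedAddCommGroup EE] [NormedSpace ℝ EE] [FiniteDimensional ℝ EE]
  {M : Type*} [TopologicalSpace M] [ChartedSpace EE M]
  {I : ModelWithCorners ℝ EE EE} [IsManifold I ∞ M]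

local notation "𝓕" => C^∞⟮I, M; ℝ⟯
local notation "𝓥" => Derivation ℝ C^∞⟮I, M; ℝ⟯ C^∞⟮I, M; ℝ⟯
local notation "Ω¹" =>
  (Derivation ℝ C^∞⟮I, M; ℝ⟯ C^∞⟮I, M; ℝ⟯ →ₗ[C^∞⟮I, M; ℝ⟯] C^∞⟮I, M; ℝ⟯)

theorem bracket_smul (X Y : 𝓥) (f : 𝓕) :
    ⁅X, f • Y⁆ = f • ⁅X, Y⁆ + X f • Y := by
  ext g
  simp only [Derivation.commutator_apply, Derivation.smul_apply, Derivation.add_apply,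
    smul_eq_mul, Derivation.leibniz]
  ring

theorem bracket_add_right (X Y Z : 𝓥) : ⁅X, Y + Z⁆ = ⁅X, Y⁆ + ⁅X, Z⁆ := by
  ext g
  simp only [Derivation.commutator_apply, Derivation.add_apply, map_add]
  ring

/-- The Lie derivative of a 1-form along a vector field. -/
noncomputable def lieD (X : 𝓥) (η : Ω¹) : Ω¹ where
  toFun Y := X (η Y) - η ⁅X, Y⁆
  map_add' Y Z := by simp only [map_add, bracket_add_right, Derivation.add_apply]; abel
  map_smul' f Y := by
    simp only [map_smul, smul_eq_mul, Derivation.leibniz, bracket_smul, map_add,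
      RingHom.id_apply]
    ring

/-- The contraction `i_Y dξ` of the de Rham differential of a 1-form `ξ`. -/
noncomputable def iotaD (Y : 𝓥) (ξ : Ω¹) : Ω¹ where
  toFun Z := Y (ξ Z) - Z (ξ Y) - ξ ⁅Y, Z⁆
  map_add' Z W := by simp only [map_add, bracket_add_right, Derivation.add_apply]; abel
  map_smul' f Z := by
    simp only [map_smul, smul_eq_mul, Derivation.leibniz, bracket_smul, map_add,
      Derivation.smul_apply, RingHom.id_apply]
    ring

/-- The (Leibniz-version) Courant bracket on `TM ⊕ T*M`. -/
noncomputable def courant (u v : 𝓥 × Ω¹) : 𝓥 × Ω¹ :=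
  (⁅u.1, v.1⁆, lieD u.1 v.2 - iotaD v.1 u.2)


/-- The endomorphism `N(X+ξ) = N₀X` of `TM ⊕ T*M`. -/
noncomputable def liftTop (N₀ : Derivation ℝ C^∞⟮I, M; ℝ⟯ C^∞⟮I, M; ℝ⟯
      →ₗ[C^∞⟮I, M; ℝ⟯] Derivation ℝ C^∞⟮I, M; ℝ⟯ C^∞⟮I, M; ℝ⟯)
    (u : 𝓥 × Ω¹) : 𝓥 × Ω¹ :=
  (N₀ u.1, 0)

/-- The contracted product `u ∘_N v = Nu∘v + u∘Nv − N(u∘v)`. -/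
noncomputable def contractedCourant (N : 𝓥 × Ω¹ → 𝓥 × Ω¹) (u v : 𝓥 × Ω¹) : 𝓥 × Ω¹ :=
  courant (N u) v + courant u (N v) - N (courant u v)

/-- The deformed bracket `[X,Y]_{N₀} = [N₀X,Y] + [X,N₀Y] − N₀[X,Y]`. -/
noncomputable def nbracket (N₀ : Derivation ℝ C^∞⟮I, M; ℝ⟯ C^∞⟮I, M; ℝ⟯
      →ₗ[C^∞⟮I, M; ℝ⟯] Derivation ℝ C^∞⟮I, M; ℝ⟯ C^∞⟮I, M; ℝ⟯)
    (X Y : 𝓥) : 𝓥 :=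
  ⁅N₀ X, Y⁆ + ⁅X, N₀ Y⁆ - N₀ ⁅X, Y⁆


/-- Evaluation at a function, as a 1-form. -/
noncomputable def evalForm (f : 𝓕) : Ω¹ where
  toFun Y := Y f
  map_add' X Y := rfl
  map_smul' g X := rfl

theorem evalForm_apply (f : 𝓕) (Y : 𝓥) : evalForm (I := I) (M := M) f Y = Y f := rfl

set_option maxHeartbeats 2000000 in
/-- for the Dirac structure `L = {Λξ + ξ}` of a Poisson bivector
`Λ` and `N(X+ξ) = N₀X`, if `∘_N` is skew-symmetric on sections of `L`, then
`N₀Λ` is skew-symmetric: `N₀Λ = Λ ᵗN₀`. -/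
theorem poisson_graph_skew_contracted_implies
    (Λ : (Derivation ℝ C^∞⟮I, M; ℝ⟯ C^∞⟮I, M; ℝ⟯ →ₗ[C^∞⟮I, M; ℝ⟯] C^∞⟮I, M; ℝ⟯)
      →ₗ[C^∞⟮I, M; ℝ⟯] Derivation ℝ C^∞⟮I, M; ℝ⟯ C^∞⟮I, M; ℝ⟯)
    (hΛskew : ∀ ξ η : Ω¹, ξ (Λ η) = - η (Λ ξ))
    (hΛpoisson : ∀ ξ η : Ω¹, ⁅Λ ξ, Λ η⁆ = Λ (lieD (Λ ξ) η - iotaD (Λ η) ξ))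
    (N₀ : Derivation ℝ C^∞⟮I, M; ℝ⟯ C^∞⟮I, M; ℝ⟯
      →ₗ[C^∞⟮I, M; ℝ⟯] Derivation ℝ C^∞⟮I, M; ℝ⟯ C^∞⟮I, M; ℝ⟯)
    (hskewN : ∀ ξ η : Ω¹,
      contractedCourant (liftTop N₀) (Λ ξ, ξ) (Λ η, η)
        = - contractedCourant (liftTop N₀) (Λ η, η) (Λ ξ, ξ)) :
    ∀ ξ : Ω¹, N₀ (Λ ξ) = Λ (ξ ∘ₗ N₀) := by
  have key : ∀ ξ η : Ω¹, ∀ Z : 𝓥,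
      Z (ξ (N₀ (Λ η))) + Z (η (N₀ (Λ ξ))) = 0 := by
    intro ξ η Z
    have h := congrArg (fun p => p.2 Z) (hskewN ξ η)
    simp only [contractedCourant, courant, liftTop, lieD, iotaD, Prod.snd_add, Prod.snd_sub,
      Prod.snd_neg, LinearMap.add_apply, LinearMap.sub_apply, LinearMap.neg_apply,
      LinearMap.coe_mk, AddHom.coe_mk, map_zero, LinearMap.zero_apply, zero_sub, sub_zero] at h
    linear_combination h
  intro ξ
  refine Derivation.ext fun f => ?_
  have hsk := hΛskew (evalForm f) (ξ ∘ₗ N₀)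
  have heval : (Λ (ξ ∘ₗ N₀)) f = - ξ (N₀ (Λ (evalForm f))) := by
    simpa only [evalForm_apply, LinearMap.comp_apply] using hsk
  set e : 𝓕 := (N₀ (Λ ξ)) f + ξ (N₀ (Λ (evalForm f))) with he
  have hmul : ∀ Z : 𝓥, Z f * e = 0 := by
    intro Z
    have h1 := key (evalForm f) (f • ξ) Z
    have h2 := key (evalForm f) ξ Z
    simp only [map_smul, LinearMap.smul_apply, evalForm_apply, Derivation.smul_apply,
      smul_eq_mul] at h1 h2
    have h3 : Z (f * ((N₀ (Λ ξ)) f) + f * (ξ (N₀ (Λ (evalForm f))))) = 0 := by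
      rw [map_add]; linear_combination h1
    rw [show f * ((N₀ (Λ ξ)) f) + f * (ξ (N₀ (Λ (evalForm f)))) = f * e by rw [he]; ring,
      Derivation.leibniz] at h3
    have h4 : Z e = 0 := by rw [he, map_add]; linear_combination h2
    simp only [smul_eq_mul, h4, mul_zero, zero_add] at h3
    linear_combination h3
  have hZf : (N₀ (Λ ξ) - Λ (ξ ∘ₗ N₀)) f = e := by
    rw [Derivation.sub_apply, heval, he]; ring
  have hee : e * e = 0 := by
    have := hmul (N₀ (Λ ξ) - Λ (ξ ∘ₗ N₀))
    rwa [hZf] at this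
  have he0 : e = 0 := by
    ext x
    have hx := congrFun (congrArg DFunLike.coe hee) x
    simp only [ContMDiffMap.coe_mul, Pi.mul_apply, ContMDiffMap.coe_zero, Pi.zero_apply] at hx
    have h6 : e x = 0 := by nlinarith [hx]
    simpa using h6
  rw [heval]
  have h5 : (N₀ (Λ ξ)) f + ξ (N₀ (Λ (evalForm f))) = 0 := he ▸ he0
  linear_combination h5
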